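/- arXiv:1809.02358 — 2 statements merged into one kernel-verified Lean document; each statement's English description precedes it below -/
import Mathlib

section
/- Let (G,w) be a connected weighted graph with Θ*-classes E₁,...,E_k, and for each i let C_i^1,...,C_i^{r_i} be the connected components of G ∖ E_i. Then W(G,w) ≥ (1/2) Σ_{i=1}^k Σ_{j=1}^{r_i} w(C_i^j) · w^c(C_i^j), where w(C_i^j) = Σ_{x ∈ C_i^j} w(x) and w^c(C_i^j) = Σ_{x ∉ C_i^j} w(x). Equality holds if and only if all quotient graphs G/E_i are complete graphs. -/
open Finset
open scoped Classical

noncomputable section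

variable {V : Type*}

noncomputable instance fintypeCC [Fintype V] (G : SimpleGraph V) : Fintype G.ConnectedComponent :=
  @Fintype.ofFinite _ (Finite.of_surjective G.connectedComponentMk fun C => C.exists_rep)

/-- `W(G,w) = ∑_{{u,v}⊆V(G)} w(u)w(v) d(u,v)`. -/
noncomputable def SimpleGraph.wienerMul [Fintype V] (G : SimpleGraph V) (w : V → ℝ) : ℝ :=
  (1 / 2) * ∑ u : V, ∑ v : V, (w u * w v) * (G.dist u v : ℝ)

/-- The Djoković–Winkler relation `Θ` on edges: `e Θ f` iff `e = u₁v₁`, `f = u₂v₂` are edges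
with `d(u₁,u₂) + d(v₁,v₂) ≠ d(u₁,v₂) + d(v₁,u₂)`. -/
def SimpleGraph.theta (G : SimpleGraph V) (e f : Sym2 V) : Prop :=
  ∃ u₁ v₁ u₂ v₂ : V, e = s(u₁, v₁) ∧ f = s(u₂, v₂) ∧ G.Adj u₁ v₁ ∧ G.Adj u₂ v₂ ∧
    G.dist u₁ u₂ + G.dist v₁ v₂ ≠ G.dist u₁ v₂ + G.dist v₁ u₂

/-- `E` (indexed by `Fin k`) is the family of `Θ*`-classes of `G`: a partition of the edge set
into nonempty classes, each class being the `Θ*`-closure (reflexive-transitive closure of `Θ`)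
of any of its members. -/
def IsThetaStarPartition (G : SimpleGraph V) {k : ℕ} (E : Fin k → Set (Sym2 V)) : Prop :=
  (∀ i, (E i).Nonempty ∧ E i ⊆ G.edgeSet) ∧
  (∀ e ∈ G.edgeSet, ∃! i, e ∈ E i) ∧
  (∀ i, ∀ e ∈ E i, ∀ f ∈ G.edgeSet,
    (f ∈ E i ↔ Relation.ReflTransGen G.theta e f))

/-- The quotient graph `G/F`. -/
def SimpleGraph.quotientGraph (G : SimpleGraph V) (F : Set (Sym2 V)) :
    SimpleGraph (G.deleteEdges F).ConnectedComponent where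
  Adj C D := C ≠ D ∧ ∃ u v : V, G.Adj u v ∧
    (G.deleteEdges F).connectedComponentMk u = C ∧ (G.deleteEdges F).connectedComponentMk v = D
  symm := by
    constructor
    rintro C D ⟨hne, u, v, h, hu, hv⟩
    exact ⟨hne.symm, v, u, h.symm, hv, hu⟩
  loopless := by constructor; rintro C ⟨hne, -⟩; exact hne rfl

/-- The quotient graph of a connected graph is connected. -/
lemma quotientGraph_connected (G : SimpleGraph V) (hG : G.Connected)
    (F : Set (Sym2 V)) : (G.quotientGraph F).Connected := by
  rw [SimpleGraph.connected_iff]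
  refine ⟨fun C D => ?_, ?_⟩
  · obtain ⟨u, rfl⟩ := C.exists_rep
    obtain ⟨v, rfl⟩ := D.exists_rep
    obtain ⟨p⟩ := hG u v
    induction p with
    | nil => exact SimpleGraph.Reachable.refl _
    | @cons a b c h p ih =>
      refine SimpleGraph.Reachable.trans ?_ ih
      by_cases hc : (G.deleteEdges F).connectedComponentMk a
          = (G.deleteEdges F).connectedComponentMk b
      · show (G.quotientGraph F).Reachable ((G.deleteEdges F).connectedComponentMk a)
            ((G.deleteEdges F).connectedComponentMk b)
        rw [hc]
      · exact SimpleGraph.Adj.reachable ⟨hc, a, b, h, rfl, rfl⟩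
  · obtain ⟨v⟩ := hG.nonempty
    exact ⟨(G.deleteEdges F).connectedComponentMk v⟩

/-- Rewriting `∑_C w(C) wᶜ(C)` as a double sum over vertices. -/
lemma rhs_rw [Fintype V] (H : SimpleGraph V) (w : V → ℝ) :
    ∑ C : H.ConnectedComponent,
      (∑ x : V, if H.connectedComponentMk x = C then w x else 0) *
      (∑ x : V, if H.connectedComponentMk x = C then 0 else w x)
    = ∑ u : V, ∑ v : V,
        if H.connectedComponentMk u = H.connectedComponentMk v then 0 else w u * w v := by
  have h1 : ∀ C : H.ConnectedComponent,
      (∑ x : V, if H.connectedComponentMk x = C then w x else 0) *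
      (∑ x : V, if H.connectedComponentMk x = C then 0 else w x)
      = ∑ u : V, ∑ v : V, if H.connectedComponentMk u = C then
          (if H.connectedComponentMk v = C then 0 else w u * w v) else 0 := by
    intro C
    rw [Finset.sum_mul_sum]
    refine Finset.sum_congr rfl fun u _ => Finset.sum_congr rfl fun v _ => ?_
    split_ifs <;> ring
  calc ∑ C : H.ConnectedComponent,
      (∑ x : V, if H.connectedComponentMk x = C then w x else 0) *
      (∑ x : V, if H.connectedComponentMk x = C then 0 else w x)
      = ∑ C : H.ConnectedComponent, ∑ u : V, ∑ v : V,
          if H.connectedComponentMk u = C then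
            (if H.connectedComponentMk v = C then 0 else w u * w v) else 0 :=
        Finset.sum_congr rfl fun C _ => h1 C
    _ = ∑ u : V, ∑ C : H.ConnectedComponent, ∑ v : V,
          if H.connectedComponentMk u = C then
            (if H.connectedComponentMk v = C then 0 else w u * w v) else 0 :=
        Finset.sum_comm
    _ = ∑ u : V, ∑ v : V, ∑ C : H.ConnectedComponent,
          if H.connectedComponentMk u = C then
            (if H.connectedComponentMk v = C then 0 else w u * w v) else 0 :=
        Finset.sum_congr rfl fun u _ => Finset.sum_comm
    _ = ∑ u : V, ∑ v : V,
        if H.connectedComponentMk u = H.connectedComponentMk v then 0 else w u * w v := by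
        refine Finset.sum_congr rfl fun u _ => Finset.sum_congr rfl fun v _ => ?_
        rw [Finset.sum_ite_eq, if_pos (Finset.mem_univ _)]
        by_cases h : H.connectedComponentMk u = H.connectedComponentMk v
        · rw [if_pos h.symm, if_pos h]
        · rw [if_neg (fun he => h he.symm), if_neg h]

/-- Let `(G,w)` be a connected weighted graph with `Θ*`-classes `E₁,…,E_k` and
let `C_i^1,…,C_i^{r_i}` be the components of `G ∖ Eᵢ`. Then
`W(G,w) ≥ (1/2) ∑ᵢ ∑ⱼ w(C_i^j) · w^c(C_i^j)`, with equality iff every quotient `G/Eᵢ` is a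
complete graph (equivalently, iff `G` is a partial Hamming graph). -/
theorem wienerMul_ge_and_eq_iff_complete [Fintype V] (G : SimpleGraph V) (hG : G.Connected)
    (w : V → ℝ) (hw : ∀ v, 0 < w v)
    (k : ℕ) (E : Fin k → Set (Sym2 V)) (hE : IsThetaStarPartition G E)
    (hdist : ∀ u v : V, G.dist u v =
      ∑ i, (G.quotientGraph (E i)).dist
        ((G.deleteEdges (E i)).connectedComponentMk u)
        ((G.deleteEdges (E i)).connectedComponentMk v)) :
    G.wienerMul w ≥ (1 / 2) * ∑ i, ∑ C : (G.deleteEdges (E i)).ConnectedComponent,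
        (∑ x : V, if (G.deleteEdges (E i)).connectedComponentMk x = C then w x else 0) *
        (∑ x : V, if (G.deleteEdges (E i)).connectedComponentMk x = C then 0 else w x) ∧
    (G.wienerMul w = (1 / 2) * ∑ i, ∑ C : (G.deleteEdges (E i)).ConnectedComponent,
        (∑ x : V, if (G.deleteEdges (E i)).connectedComponentMk x = C then w x else 0) *
        (∑ x : V, if (G.deleteEdges (E i)).connectedComponentMk x = C then 0 else w x) ↔
      ∀ i, ∀ C D : (G.deleteEdges (E i)).ConnectedComponent, C ≠ D →
        (G.quotientGraph (E i)).Adj C D) := by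
  classical
  have hqc : ∀ i, (G.quotientGraph (E i)).Connected :=
    fun i => quotientGraph_connected G hG (E i)
  -- shorthand
  set A : Fin k → V → V → ℝ := fun i u v => (w u * w v) *
      ((G.quotientGraph (E i)).dist
        ((G.deleteEdges (E i)).connectedComponentMk u)
        ((G.deleteEdges (E i)).connectedComponentMk v) : ℝ) with hA
  set B : Fin k → V → V → ℝ := fun i u v =>
      if (G.deleteEdges (E i)).connectedComponentMk u
        = (G.deleteEdges (E i)).connectedComponentMk v then 0 else w u * w v with hB
  -- rewrite the Wiener index
  have hW : G.wienerMul w = (1/2) * ∑ i, ∑ u : V, ∑ v : V, A i u v := by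
    rw [SimpleGraph.wienerMul]
    congr 1
    have hterm : ∀ u v : V, (w u * w v) * (G.dist u v : ℝ) = ∑ i, A i u v := by
      intro u v
      rw [hdist u v]
      push_cast
      rw [Finset.mul_sum]
    calc ∑ u : V, ∑ v : V, (w u * w v) * (G.dist u v : ℝ)
        = ∑ u : V, ∑ v : V, ∑ i, A i u v :=
          Finset.sum_congr rfl fun u _ => Finset.sum_congr rfl fun v _ => hterm u v
      _ = ∑ u : V, ∑ i, ∑ v : V, A i u v :=
          Finset.sum_congr rfl fun u _ => Finset.sum_comm
      _ = ∑ i, ∑ u : V, ∑ v : V, A i u v := Finset.sum_comm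
  -- rewrite the right-hand side
  have hR : ∀ i, ∑ C : (G.deleteEdges (E i)).ConnectedComponent,
        (∑ x : V, if (G.deleteEdges (E i)).connectedComponentMk x = C then w x else 0) *
        (∑ x : V, if (G.deleteEdges (E i)).connectedComponentMk x = C then 0 else w x)
      = ∑ u : V, ∑ v : V, B i u v := fun i => rhs_rw (G.deleteEdges (E i)) w
  -- pointwise inequality
  have hpt : ∀ i (u v : V), B i u v ≤ A i u v := by
    intro i u v
    simp only [hA, hB]
    by_cases h : (G.deleteEdges (E i)).connectedComponentMk u
        = (G.deleteEdges (E i)).connectedComponentMk v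
    · rw [if_pos h, h, SimpleGraph.dist_self]
      norm_num
    · rw [if_neg h]
      have h1 : 1 ≤ (G.quotientGraph (E i)).dist
          ((G.deleteEdges (E i)).connectedComponentMk u)
          ((G.deleteEdges (E i)).connectedComponentMk v) := (hqc i).pos_dist_of_ne h
      have h1' : (1:ℝ) ≤ ((G.quotientGraph (E i)).dist
          ((G.deleteEdges (E i)).connectedComponentMk u)
          ((G.deleteEdges (E i)).connectedComponentMk v) : ℝ) := by exact_mod_cast h1
      have hwuv : (0:ℝ) < w u * w v := mul_pos (hw u) (hw v)
      nlinarith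
  have hle : ∑ i, ∑ u : V, ∑ v : V, B i u v ≤ ∑ i, ∑ u : V, ∑ v : V, A i u v :=
    Finset.sum_le_sum fun i _ => Finset.sum_le_sum fun u _ =>
      Finset.sum_le_sum fun v _ => hpt i u v
  constructor
  · -- the inequality
    rw [hW, ge_iff_le]
    have : ∑ i, ∑ C : (G.deleteEdges (E i)).ConnectedComponent,
        (∑ x : V, if (G.deleteEdges (E i)).connectedComponentMk x = C then w x else 0) *
        (∑ x : V, if (G.deleteEdges (E i)).connectedComponentMk x = C then 0 else w x)
        = ∑ i, ∑ u : V, ∑ v : V, B i u v := Finset.sum_congr rfl fun i _ => hR i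
    rw [this]
    linarith
  · -- equality characterization
    rw [hW]
    have hrw : ∑ i, ∑ C : (G.deleteEdges (E i)).ConnectedComponent,
        (∑ x : V, if (G.deleteEdges (E i)).connectedComponentMk x = C then w x else 0) *
        (∑ x : V, if (G.deleteEdges (E i)).connectedComponentMk x = C then 0 else w x)
        = ∑ i, ∑ u : V, ∑ v : V, B i u v := Finset.sum_congr rfl fun i _ => hR i
    rw [hrw]
    constructor
    · intro hEq i C D hCD
      have hSA : ∑ i, ∑ u : V, ∑ v : V, A i u v = ∑ i, ∑ u : V, ∑ v : V, B i u v :=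
        mul_left_cancel₀ (by norm_num : (1/2:ℝ) ≠ 0) hEq
      have hall : ∀ i (u v : V), B i u v = A i u v := by
        intro i u v
        have h1 := (Finset.sum_eq_sum_iff_of_le
          (fun i (_ : i ∈ Finset.univ) => Finset.sum_le_sum fun u (_ : u ∈ Finset.univ) =>
            Finset.sum_le_sum fun v (_ : v ∈ Finset.univ) => hpt i u v)).mp
          hSA.symm i (Finset.mem_univ i)
        have h2 := (Finset.sum_eq_sum_iff_of_le
          (fun u (_ : u ∈ Finset.univ) =>
            Finset.sum_le_sum fun v (_ : v ∈ Finset.univ) => hpt i u v)).mp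
          h1 u (Finset.mem_univ u)
        exact (Finset.sum_eq_sum_iff_of_le
          (fun v (_ : v ∈ Finset.univ) => hpt i u v)).mp h2 v (Finset.mem_univ v)
      obtain ⟨u, rfl⟩ := C.exists_rep
      obtain ⟨v, rfl⟩ := D.exists_rep
      have hCD' : (G.deleteEdges (E i)).connectedComponentMk u
          ≠ (G.deleteEdges (E i)).connectedComponentMk v := hCD
      have h := hall i u v
      simp only [hA, hB] at h
      rw [if_neg hCD'] at h
      have hwuv : (0:ℝ) < w u * w v := mul_pos (hw u) (hw v)
      have h1 : w u * w v * (1:ℝ) = w u * w v * ((G.quotientGraph (E i)).dist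
          ((G.deleteEdges (E i)).connectedComponentMk u)
          ((G.deleteEdges (E i)).connectedComponentMk v) : ℝ) := by
        rw [mul_one]; exact h
      have h2 : (1:ℝ) = ((G.quotientGraph (E i)).dist
          ((G.deleteEdges (E i)).connectedComponentMk u)
          ((G.deleteEdges (E i)).connectedComponentMk v) : ℝ) :=
        mul_left_cancel₀ (ne_of_gt hwuv) h1
      have h3 : (G.quotientGraph (E i)).dist
          ((G.deleteEdges (E i)).connectedComponentMk u)
          ((G.deleteEdges (E i)).connectedComponentMk v) = 1 := by exact_mod_cast h2.symm
      exact SimpleGraph.dist_eq_one_iff_adj.mp h3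
    · intro hcomp
      have hall : ∀ i (u v : V), A i u v = B i u v := by
        intro i u v
        simp only [hA, hB]
        by_cases heq : (G.deleteEdges (E i)).connectedComponentMk u
            = (G.deleteEdges (E i)).connectedComponentMk v
        · rw [if_pos heq, heq, SimpleGraph.dist_self]; norm_num
        · rw [if_neg heq, SimpleGraph.dist_eq_one_iff_adj.mpr (hcomp i _ _ heq)]; norm_num
      congr 1
      exact Finset.sum_congr rfl fun i _ => Finset.sum_congr rfl fun u _ =>
        Finset.sum_congr rfl fun v _ => hall i u v

end
end

section
/- Let G be a connected graph with Θ*-classes E₁,...,E_k, and suppose every quotient graph G/Eᵢ is a complete graph. Then for any weight w : V(G) → ℝ⁺, W(G,w) = (1/2) Σ_{i=1}^k Σ_{j=1}^{r_i} w(C_i^j) w^c(C_i^j), where C_i^1,...,C_i^{r_i} are the components of G ∖ Eᵢ, w(C_i^j) = Σ_{x∈C_i^j} w(x), and w^c(C_i^j) = Σ_{x∉C_i^j} w(x). -/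
open Finset
open scoped Classical

noncomputable section

variable {V : Type*}

/-- Let `G` be a connected graph whose `Θ*`-classes are `E₁,…,E_k` and
suppose every quotient graph `G/Eᵢ` is complete. Then for any (positive) weight `w`,
`W(G,w) = (1/2) ∑ᵢ ∑ⱼ w(C_i^j) w^c(C_i^j)`, where `C_i^1,…,C_i^{r_i}` are the components of
`G ∖ Eᵢ`. -/
theorem wienerMul_eq_of_complete_quotients [Fintype V] (G : SimpleGraph V) (hG : G.Connected)
    (w : V → ℝ) (hw : ∀ v, 0 < w v)
    (k : ℕ) (E : Fin k → Set (Sym2 V)) (hE : IsThetaStarPartition G E)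
    (hdist : ∀ u v : V, G.dist u v =
      ∑ i, (G.quotientGraph (E i)).dist
        ((G.deleteEdges (E i)).connectedComponentMk u)
        ((G.deleteEdges (E i)).connectedComponentMk v))
    (hcomplete : ∀ i, ∀ C D : (G.deleteEdges (E i)).ConnectedComponent, C ≠ D →
      (G.quotientGraph (E i)).Adj C D) :
    G.wienerMul w = (1 / 2) * ∑ i, ∑ C : (G.deleteEdges (E i)).ConnectedComponent,
        (∑ x : V, if (G.deleteEdges (E i)).connectedComponentMk x = C then w x else 0) *
        (∑ x : V, if (G.deleteEdges (E i)).connectedComponentMk x = C then 0 else w x) := by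
  classical
  have hone : ∀ i (u v : V),
      (((G.quotientGraph (E i)).dist ((G.deleteEdges (E i)).connectedComponentMk u)
        ((G.deleteEdges (E i)).connectedComponentMk v) : ℕ) : ℝ)
      = if (G.deleteEdges (E i)).connectedComponentMk u =
          (G.deleteEdges (E i)).connectedComponentMk v then 0 else 1 := by
    intro i u v
    split_ifs with h
    · rw [h, SimpleGraph.dist_self]; norm_num
    · rw [SimpleGraph.dist_eq_one_iff_adj.mpr (hcomplete i _ _ h)]; norm_num
  have key : ∀ i : Fin k,
      (∑ u : V, ∑ v : V, w u * w v *
        (if (G.deleteEdges (E i)).connectedComponentMk u =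
            (G.deleteEdges (E i)).connectedComponentMk v then (0:ℝ) else 1))
      = ∑ C : (G.deleteEdges (E i)).ConnectedComponent,
        (∑ x : V, if (G.deleteEdges (E i)).connectedComponentMk x = C then w x else 0) *
        (∑ x : V, if (G.deleteEdges (E i)).connectedComponentMk x = C then 0 else w x) := by
    intro i
    refine Eq.symm ?_
    simp_rw [Finset.sum_mul_sum]
    rw [Finset.sum_comm]
    refine Finset.sum_congr rfl fun u _ => ?_
    rw [Finset.sum_comm]
    refine Finset.sum_congr rfl fun v _ => ?_
    rw [Finset.sum_eq_single ((G.deleteEdges (E i)).connectedComponentMk u)]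
    · rw [if_pos rfl]
      split_ifs with h1 h2 h2
      · ring
      · exact absurd h1.symm h2
      · exact absurd h2.symm h1
      · ring
    · intro C _ hC
      simp [Ne.symm hC]
    · simp
  unfold SimpleGraph.wienerMul
  congr 1
  have : ∀ u v : V, (G.dist u v : ℝ) = ∑ i,
      (((G.quotientGraph (E i)).dist ((G.deleteEdges (E i)).connectedComponentMk u)
        ((G.deleteEdges (E i)).connectedComponentMk v) : ℕ) : ℝ) := by
    intro u v
    rw [hdist u v]; push_cast; ring
  conv_lhs => simp only [this, hone, Finset.mul_sum]
  conv_lhs => enter [2, u]; rw [Finset.sum_comm]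
  rw [Finset.sum_comm]
  exact Finset.sum_congr rfl fun i _ => key i

end
end
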